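/- Let R be a commutative ring, M an R-module, and d : M → R a quasi-ideal (R-linear with d(x)·y = d(y)·x). Let (M × R, ·) be the commutative ring of the previous construction. Then the map c : (M × R) ×_{t,s} (M × R) → M × R, defined on pairs with t(m,r) = s(m',r') (i.e. r' = r + d(m)) by ((m, r), (m', r')) ↦ (m + m', r), is a ring homomorphism, where the fiber product carries the componentwise ring structure. -/

import Mathlib

/-- The multiplication attached to a quasi-ideal `d : M → R`:
`(m₁, r₁)·(m₂, r₂) = (r₂·m₁ + r₁·m₂ + d(m₁)·m₂, r₁·r₂)`. -/
def quasiIdealMul {R M : Type*} [CommRing R] [AddCommGroup M] [Module R M]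
    (d : M →ₗ[R] R) (a b : M × R) : M × R :=
  (b.2 • a.1 + a.2 • b.1 + d a.1 • b.1, a.2 * b.2)

/-- The groupoid composition `c((m, r), (m', r')) = (m + m', r)` attached to a quasi-ideal. -/
def quasiIdealComp {R M : Type*} [CommRing R] [AddCommGroup M] [Module R M]
    (a b : M × R) : M × R :=
  (a.1 + b.1, a.2)

theorem quasiIdeal_comp_is_ring_hom (R M : Type*) [CommRing R] [AddCommGroup M] [Module R M]
    (d : M →ₗ[R] R) (hd : ∀ x y : M, d x • y = d y • x) :
    -- additivity on composable pairs
    (∀ a a' b b' : M × R, a'.2 = a.2 + d a.1 → b'.2 = b.2 + d b.1 →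
      quasiIdealComp (R := R) (a + b) (a' + b') =
        quasiIdealComp (R := R) a a' + quasiIdealComp (R := R) b b') ∧
    -- multiplicativity on composable pairs
    (∀ a a' b b' : M × R, a'.2 = a.2 + d a.1 → b'.2 = b.2 + d b.1 →
      quasiIdealComp (R := R) (quasiIdealMul d a b) (quasiIdealMul d a' b') =
        quasiIdealMul d (quasiIdealComp (R := R) a a') (quasiIdealComp (R := R) b b')) ∧
    -- the unit is preserved
    quasiIdealComp (R := R) ((0 : M), (1 : R)) ((0 : M), (1 : R)) = ((0 : M), (1 : R)) := by
  refine ⟨fun a a' b b' _ _ => by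
    simp only [quasiIdealComp, Prod.fst_add, Prod.snd_add, Prod.mk_add_mk]
    rw [Prod.mk.injEq]; exact ⟨by abel, rfl⟩, fun a a' b b' ha hb => ?_, by simp [quasiIdealComp]⟩
  simp only [quasiIdealComp, quasiIdealMul, Prod.mk.injEq, ha, hb, map_add]
  constructor
  · have := hd b.1 a'.1
    simp only [add_smul, smul_add]
    rw [this]
    abel
  · trivial
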